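/- Completion-of-squares identity for the error transfer matrix: For all real matrices H ∈ ℝ^{q×p}, L ∈ ℝ^{r×p}, and K ∈ ℝ^{r×q}, with K° := L Hᵀ (I + H Hᵀ)⁻¹ and T_K := [K·H − L, K], one has T_K T_Kᵀ = (K − K°)(I + H Hᵀ)(K − K°)ᵀ + L(I + Hᵀ H)⁻¹ Lᵀ. In particular T_{K°} T_{K°}ᵀ = L(I + Hᵀ H)⁻¹ Lᵀ, T_K T_Kᵀ ⪰ T_{K°} T_{K°}ᵀ for every K, and equality holds if and only if K = K°. -/

import Mathlib

open Matrix

noncomputable section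

/-- The error transfer matrix `T_K = [K·H − L, K]`. -/
def TK {p q r : ℕ} (H : Matrix (Fin q) (Fin p) ℝ) (L : Matrix (Fin r) (Fin p) ℝ)
    (K : Matrix (Fin r) (Fin q) ℝ) : Matrix (Fin r) (Fin p ⊕ Fin q) ℝ :=
  Matrix.fromCols (K * H - L) K

/-- The nominal noncausal filter `K° = L Hᵀ (I + H Hᵀ)⁻¹`. -/
def Knom {p q r : ℕ} (H : Matrix (Fin q) (Fin p) ℝ) (L : Matrix (Fin r) (Fin p) ℝ) :
    Matrix (Fin r) (Fin q) ℝ :=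
  L * Hᵀ * (1 + H * Hᵀ)⁻¹

section Aux

variable {p q r : ℕ} (H : Matrix (Fin q) (Fin p) ℝ) (L : Matrix (Fin r) (Fin p) ℝ)

lemma posDef_aux : (1 + H * Hᵀ).PosDef := by
  have : Hᴴ = Hᵀ := rfl
  exact Matrix.PosDef.one.add_posSemidef (this ▸ posSemidef_self_mul_conjTranspose H)

lemma detUnit_aux : IsUnit (1 + H * Hᵀ).det := (posDef_aux H).det_pos.ne'.isUnit

lemma symm_aux : (1 + H * Hᵀ)ᵀ = 1 + H * Hᵀ := by
  simp [transpose_add, transpose_mul]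

lemma inv_symm_aux : ((1 + H * Hᵀ)⁻¹)ᵀ = (1 + H * Hᵀ)⁻¹ := by
  rw [transpose_nonsing_inv, symm_aux]

lemma KnomA_aux : Knom H L * (1 + H * Hᵀ) = L * Hᵀ := by
  rw [Knom, Matrix.mul_assoc, nonsing_inv_mul _ (detUnit_aux H), Matrix.mul_one]

lemma Knomt_aux : (Knom H L)ᵀ = (1 + H * Hᵀ)⁻¹ * (H * Lᵀ) := by
  rw [Knom, transpose_mul, transpose_mul, inv_symm_aux, transpose_transpose]

lemma AKnomt_aux : (1 + H * Hᵀ) * (Knom H L)ᵀ = H * Lᵀ := by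
  rw [Knomt_aux, ← Matrix.mul_assoc, mul_nonsing_inv _ (detUnit_aux H), Matrix.one_mul]

/-- Woodbury-type identity. -/
lemma woodbury_aux : (1 + Hᵀ * H)⁻¹ = 1 - Hᵀ * (1 + H * Hᵀ)⁻¹ * H := by
  refine inv_eq_right_inv ?_
  have h1 : (1 + H * Hᵀ) * (1 + H * Hᵀ)⁻¹ = 1 := mul_nonsing_inv _ (detUnit_aux H)
  have key : Hᵀ * (1 + H * Hᵀ)⁻¹ * H + Hᵀ * H * (Hᵀ * (1 + H * Hᵀ)⁻¹ * H)
      = Hᵀ * H := by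
    calc Hᵀ * (1 + H * Hᵀ)⁻¹ * H + Hᵀ * H * (Hᵀ * (1 + H * Hᵀ)⁻¹ * H)
        = Hᵀ * ((1 + H * Hᵀ) * (1 + H * Hᵀ)⁻¹) * H := by
          simp only [Matrix.add_mul, Matrix.mul_add, Matrix.mul_one, Matrix.one_mul,
            Matrix.mul_assoc]
      _ = Hᵀ * H := by rw [h1, Matrix.mul_one]
  calc (1 + Hᵀ * H) * (1 - Hᵀ * (1 + H * Hᵀ)⁻¹ * H)
      = 1 + Hᵀ * H - (Hᵀ * (1 + H * Hᵀ)⁻¹ * H + Hᵀ * H * (Hᵀ * (1 + H * Hᵀ)⁻¹ * H)) := by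
        simp only [Matrix.add_mul, Matrix.mul_sub, Matrix.one_mul, Matrix.mul_one]
    _ = 1 := by rw [key]; abel

/-- The completion-of-squares identity. -/
lemma main_aux (K : Matrix (Fin r) (Fin q) ℝ) :
    TK H L K * (TK H L K)ᵀ
      = (K - Knom H L) * (1 + H * Hᵀ) * (K - Knom H L)ᵀ + L * (1 + Hᵀ * H)⁻¹ * Lᵀ := by
  have lhs : TK H L K * (TK H L K)ᵀ = (K * H - L) * (K * H - L)ᵀ + K * Kᵀ := by
    rw [TK, transpose_fromCols, fromCols_mul_fromRows]
  have a1 : K * (1 + H * Hᵀ) * (Knom H L)ᵀ = K * (H * Lᵀ) := by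
    rw [Matrix.mul_assoc, AKnomt_aux]
  have a2 : Knom H L * (1 + H * Hᵀ) * Kᵀ = L * Hᵀ * Kᵀ := by rw [KnomA_aux]
  have a3 : Knom H L * (1 + H * Hᵀ) * (Knom H L)ᵀ
      = L * (Hᵀ * (1 + H * Hᵀ)⁻¹ * H) * Lᵀ := by
    rw [KnomA_aux, Knomt_aux]; simp only [Matrix.mul_assoc]
  have e1 : (K - Knom H L) * (1 + H * Hᵀ) * (K - Knom H L)ᵀ
      = K * (1 + H * Hᵀ) * Kᵀ - K * (H * Lᵀ) - (L * Hᵀ * Kᵀ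
        - L * (Hᵀ * (1 + H * Hᵀ)⁻¹ * H) * Lᵀ) := by
    rw [transpose_sub, Matrix.sub_mul, Matrix.sub_mul, Matrix.mul_sub, Matrix.mul_sub,
      a1, a2, a3]
  rw [lhs, e1, woodbury_aux]
  simp only [Matrix.sub_mul, Matrix.mul_sub, Matrix.add_mul, Matrix.mul_add,
    transpose_sub, transpose_mul, Matrix.mul_one, Matrix.one_mul, Matrix.mul_assoc]
  abel

lemma sq_zero_aux (N : Matrix (Fin r) (Fin q) ℝ)
    (h : N * (1 + H * Hᵀ) * Nᵀ = 0) : N = 0 := by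
  obtain ⟨B, hB⟩ : ∃ B : Matrix (Fin q ⊕ Fin p) (Fin q) ℝ, 1 + H * Hᵀ = Bᴴ * B := by
    refine ⟨Matrix.fromRows 1 Hᵀ, ?_⟩
    rw [show (Matrix.fromRows (1 : Matrix (Fin q) (Fin q) ℝ) Hᵀ)ᴴ
      = (Matrix.fromRows (1 : Matrix (Fin q) (Fin q) ℝ) Hᵀ)ᵀ from rfl, transpose_fromRows,
      fromCols_mul_fromRows, transpose_transpose, transpose_one, Matrix.one_mul]
  have hBN : B * Nᵀ = 0 := by
    rw [← conjTranspose_mul_self_eq_zero (A := B * Nᵀ)]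
    have : (B * Nᵀ)ᴴ * (B * Nᵀ) = N * (1 + H * Hᵀ) * Nᵀ := by
      rw [conjTranspose_mul, hB]
      have : Nᵀᴴ = N := by
        have : Nᵀᴴ = Nᵀᵀ := rfl
        rw [this, transpose_transpose]
      rw [this]; simp only [Matrix.mul_assoc]
    rw [this, h]
  have hANt : (1 + H * Hᵀ) * Nᵀ = 0 := by
    rw [hB, Matrix.mul_assoc, hBN, Matrix.mul_zero]
  have : Nᵀ = 0 := by
    have := congrArg (fun M => (1 + H * Hᵀ)⁻¹ * M) hANt
    simpa [← Matrix.mul_assoc, nonsing_inv_mul _ (detUnit_aux H)] using this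
  calc N = Nᵀᵀ := (transpose_transpose N).symm
    _ = 0 := by rw [this]; simp

end Aux

/-- Completion-of-squares identity for the error transfer matrix. -/
theorem stmt_2 {p q r : ℕ} (H : Matrix (Fin q) (Fin p) ℝ) (L : Matrix (Fin r) (Fin p) ℝ)
    (K : Matrix (Fin r) (Fin q) ℝ) :
    TK H L K * (TK H L K)ᵀ
        = (K - Knom H L) * (1 + H * Hᵀ) * (K - Knom H L)ᵀ + L * (1 + Hᵀ * H)⁻¹ * Lᵀ ∧
      TK H L (Knom H L) * (TK H L (Knom H L))ᵀ = L * (1 + Hᵀ * H)⁻¹ * Lᵀ ∧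
      (TK H L K * (TK H L K)ᵀ - TK H L (Knom H L) * (TK H L (Knom H L))ᵀ).PosSemidef ∧
      (TK H L K * (TK H L K)ᵀ = TK H L (Knom H L) * (TK H L (Knom H L))ᵀ ↔ K = Knom H L) := by
  have h1 := main_aux H L K
  have h2 : TK H L (Knom H L) * (TK H L (Knom H L))ᵀ = L * (1 + Hᵀ * H)⁻¹ * Lᵀ := by
    rw [main_aux H L (Knom H L)]; simp
  have hdiff : TK H L K * (TK H L K)ᵀ - TK H L (Knom H L) * (TK H L (Knom H L))ᵀ
      = (K - Knom H L) * (1 + H * Hᵀ) * (K - Knom H L)ᵀ := by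
    rw [h1, h2]; abel
  refine ⟨h1, h2, ?_, ?_⟩
  · rw [hdiff]
    have := (posDef_aux H).posSemidef.mul_mul_conjTranspose_same (K - Knom H L)
    simpa using this
  · constructor
    · intro h
      have h0 : (K - Knom H L) * (1 + H * Hᵀ) * (K - Knom H L)ᵀ = 0 := by
        rw [← hdiff, h, sub_self]
      have := sq_zero_aux H (K - Knom H L) h0
      linear_combination (norm := abel) this
    · rintro rfl; rfl
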